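/- Let M be a positive integer, let X be a real random variable with cumulative distribution function F(x) = 1 − ∑_{k=0}^{M−1} (Mx)^k·e^{−Mx}/k! for x ≥ 0 and F(x) = 0 for x < 0 (i.e., X ~ Gamma(M, 1/M)), and let Y be a nonnegative random variable independent of X with E[Y^M] < ∞. Then lim_{θ → 0⁺} P(X < θ·Y)/θ^M = (M^{M−1}/(M−1)!)·E[Y^M]. -/

import Mathlib

open MeasureTheory ProbabilityTheory

namespace Stmt13Aux

open Filter


noncomputable def G (M : ℕ) (x : ℝ) : ℝ :=
  1 - ∑ k ∈ Finset.range M, ((M : ℝ) * x) ^ k * Real.exp (-((M : ℝ) * x)) / (k.factorial : ℝ)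

noncomputable def Fc (M : ℕ) (x : ℝ) : ℝ := if 0 ≤ x then G M x else 0

lemma exp_eq_tsum (l : ℝ) : Real.exp l = ∑' n : ℕ, l ^ n / (n.factorial : ℝ) := by
  rw [Real.exp_eq_exp_ℝ, NormedSpace.exp_eq_tsum_div]

lemma tail_le (M : ℕ) {l : ℝ} (hl : 0 ≤ l) :
    Real.exp l - ∑ k ∈ Finset.range M, l ^ k / (k.factorial : ℝ)
      ≤ l ^ M / (M.factorial : ℝ) * Real.exp l := by
  have hs : Summable (fun n : ℕ => l ^ n / (n.factorial : ℝ)) := Real.summable_pow_div_factorial l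
  have hsplit := Summable.sum_add_tsum_nat_add M hs
  have h1 : Real.exp l - ∑ k ∈ Finset.range M, l ^ k / (k.factorial : ℝ)
      = ∑' i : ℕ, l ^ (i + M) / ((i + M).factorial : ℝ) := by
    rw [exp_eq_tsum, ← hsplit]; ring
  rw [h1]
  have hshift : Summable (fun i : ℕ => l ^ (i + M) / ((i + M).factorial : ℝ)) :=
    (summable_nat_add_iff M).2 hs
  have hkey : ∀ i : ℕ, l ^ (i + M) / ((i + M).factorial : ℝ)
      ≤ l ^ M / (M.factorial : ℝ) * (l ^ i / (i.factorial : ℝ)) := by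
    intro i
    have hfac : ((M.factorial * i.factorial : ℕ) : ℝ) ≤ (((i + M).factorial : ℕ) : ℝ) := by
      exact_mod_cast Nat.le_of_dvd (Nat.factorial_pos _)
        (by simpa [Nat.add_comm] using Nat.factorial_mul_factorial_dvd_factorial_add M i)
    have h2 : l ^ (i + M) / (((i + M).factorial : ℕ) : ℝ)
        ≤ l ^ (i + M) / ((M.factorial * i.factorial : ℕ) : ℝ) := by
      gcongr
    refine h2.trans_eq ?_
    rw [pow_add]
    push_cast
    have hM0 : (M.factorial : ℝ) ≠ 0 := by positivity
    have hi0 : (i.factorial : ℝ) ≠ 0 := by positivity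
    field_simp
  calc ∑' i : ℕ, l ^ (i + M) / ((i + M).factorial : ℝ)
      ≤ ∑' i : ℕ, l ^ M / (M.factorial : ℝ) * (l ^ i / (i.factorial : ℝ)) :=
        Summable.tsum_le_tsum hkey hshift (hs.mul_left _)
    _ = l ^ M / (M.factorial : ℝ) * Real.exp l := by rw [tsum_mul_left, ← exp_eq_tsum]

lemma G_eq (M : ℕ) (x : ℝ) :
    G M x = 1 - Real.exp (-((M : ℝ) * x)) * ∑ k ∈ Finset.range M,
      ((M : ℝ) * x) ^ k / (k.factorial : ℝ) := by
  rw [G, Finset.mul_sum]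
  congr 1
  refine Finset.sum_congr rfl fun k _ => ?_
  ring

lemma lower_aux (M : ℕ) {l : ℝ} (hl : 0 ≤ l) :
    Real.exp (-l) * l ^ M / (M.factorial : ℝ)
      ≤ 1 - Real.exp (-l) * ∑ k ∈ Finset.range M, l ^ k / (k.factorial : ℝ) := by
  have hsum : ∑ k ∈ Finset.range (M + 1), l ^ k / (k.factorial : ℝ) ≤ Real.exp l :=
    Real.sum_le_exp_of_nonneg hl (M + 1)
  rw [Finset.sum_range_succ] at hsum
  have hexp : Real.exp (-l) * Real.exp l = 1 := by rw [← Real.exp_add]; simp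
  have hpos : (0:ℝ) < Real.exp (-l) := Real.exp_pos _
  have h := mul_le_mul_of_nonneg_left hsum hpos.le
  rw [mul_add, hexp] at h
  have h2 : Real.exp (-l) * (l ^ M / (M.factorial : ℝ)) = Real.exp (-l) * l ^ M / (M.factorial : ℝ) := by
    ring
  linarith

lemma upper_aux (M : ℕ) {l : ℝ} (hl : 0 ≤ l) :
    1 - Real.exp (-l) * ∑ k ∈ Finset.range M, l ^ k / (k.factorial : ℝ)
      ≤ l ^ M / (M.factorial : ℝ) := by
  have htail := tail_le M hl
  have hexp : Real.exp (-l) * Real.exp l = 1 := by rw [← Real.exp_add]; simp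
  have hpos : (0:ℝ) < Real.exp (-l) := Real.exp_pos _
  have h := mul_le_mul_of_nonneg_left htail hpos.le
  rw [mul_sub, hexp] at h
  have h2 : Real.exp (-l) * (l ^ M / (M.factorial : ℝ) * Real.exp l)
      = l ^ M / (M.factorial : ℝ) * (Real.exp (-l) * Real.exp l) := by ring
  rw [h2, hexp, mul_one] at h
  linarith

lemma Fc_lower (M : ℕ) {x : ℝ} (hx : 0 ≤ x) :
    Real.exp (-((M : ℝ) * x)) * ((M : ℝ) * x) ^ M / (M.factorial : ℝ) ≤ Fc M x := by
  rw [Fc, if_pos hx, G_eq]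
  exact lower_aux M (by positivity)

lemma Fc_nonneg (M : ℕ) (x : ℝ) : 0 ≤ Fc M x := by
  rcases le_or_gt 0 x with hx | hx
  · refine le_trans ?_ (Fc_lower M hx)
    positivity
  · rw [Fc, if_neg (not_le.2 hx)]

lemma Fc_upper (M : ℕ) {x : ℝ} (hx : 0 ≤ x) :
    Fc M x ≤ ((M : ℝ) * x) ^ M / (M.factorial : ℝ) := by
  rw [Fc, if_pos hx, G_eq]
  exact upper_aux M (by positivity)


lemma G_continuous (M : ℕ) : Continuous (G M) := by
  unfold G
  fun_prop

lemma G_zero {M : ℕ} (hM : 1 ≤ M) : G M 0 = 0 := by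
  unfold G
  rw [Finset.sum_eq_single 0]
  · simp
  · intro k _ hk
    simp [zero_pow hk]
  · intro h
    exact absurd (Finset.mem_range.2 hM) h

lemma Fc_continuous {M : ℕ} (hM : 1 ≤ M) : Continuous (Fc M) := by
  unfold Fc
  exact Continuous.if_le (G_continuous M) continuous_const continuous_const continuous_id
    (fun x hx => by rw [← hx, G_zero hM])

lemma Fc_ratio_tendsto {M : ℕ} (hM : 1 ≤ M) :
    Tendsto (fun t : ℝ => Fc M t / t ^ M) (nhdsWithin 0 (Set.Ioi 0))
      (nhds ((M : ℝ) ^ M / (M.factorial : ℝ))) := by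
  have hlow : Tendsto (fun t : ℝ => Real.exp (-((M : ℝ) * t)) * (M : ℝ) ^ M / (M.factorial : ℝ))
      (nhdsWithin 0 (Set.Ioi 0)) (nhds ((M : ℝ) ^ M / (M.factorial : ℝ))) := by
    have hc : Continuous fun t : ℝ => Real.exp (-((M : ℝ) * t)) * (M : ℝ) ^ M / (M.factorial : ℝ) := by
      fun_prop
    have h0 := (hc.tendsto 0).mono_left (nhdsWithin_le_nhds (s := Set.Ioi 0))
    simpa using h0
  refine tendsto_of_tendsto_of_tendsto_of_le_of_le' hlow tendsto_const_nhds ?_ ?_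
  · filter_upwards [self_mem_nhdsWithin] with t ht
    have ht0 : (0:ℝ) < t := ht
    have h := Fc_lower M ht0.le
    have he : Real.exp (-((M : ℝ) * t)) * ((M : ℝ) * t) ^ M / (M.factorial : ℝ)
        = Real.exp (-((M : ℝ) * t)) * (M : ℝ) ^ M / (M.factorial : ℝ) * t ^ M := by
      rw [mul_pow]; ring
    rw [he] at h
    rw [le_div_iff₀ (by positivity)]
    exact h
  · filter_upwards [self_mem_nhdsWithin] with t ht
    have ht0 : (0:ℝ) < t := ht
    have h := Fc_upper M ht0.le
    rw [div_le_div_iff₀ (by positivity) (by positivity : (0:ℝ) < (M.factorial : ℝ))]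
    calc Fc M t * (M.factorial : ℝ)
        ≤ ((M:ℝ)*t)^M / (M.factorial : ℝ) * (M.factorial : ℝ) := by
          have hf : (0:ℝ) < (M.factorial : ℝ) := by positivity
          nlinarith
      _ = (M:ℝ)^M * t^M := by
          rw [mul_pow]
          field_simp

lemma Fc_zero {M : ℕ} (hM : 1 ≤ M) : Fc M 0 = 0 := by
  rw [Fc, if_pos le_rfl, G_zero hM]

lemma Fc_pointwise {M : ℕ} (hM : 1 ≤ M) {y : ℝ} (hy : 0 ≤ y) :
    Tendsto (fun θ : ℝ => Fc M (θ * y) / θ ^ M) (nhdsWithin 0 (Set.Ioi 0))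
      (nhds ((M : ℝ) ^ M / (M.factorial : ℝ) * y ^ M)) := by
  rcases eq_or_lt_of_le hy with hy0 | hy0
  · have : (fun θ : ℝ => Fc M (θ * y) / θ ^ M) = fun _ => 0 := by
      funext θ
      rw [← hy0, mul_zero, Fc_zero hM, zero_div]
    rw [this, ← hy0, zero_pow (by omega), mul_zero]
    exact tendsto_const_nhds
  · have hmap : Tendsto (fun θ : ℝ => θ * y) (nhdsWithin 0 (Set.Ioi 0))
        (nhdsWithin 0 (Set.Ioi 0)) := by
      rw [tendsto_nhdsWithin_iff]
      constructor
      · have : Tendsto (fun θ : ℝ => θ * y) (nhds 0) (nhds 0) := by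
          simpa using (continuous_mul_right y).tendsto (0:ℝ)
        exact this.mono_left nhdsWithin_le_nhds
      · filter_upwards [self_mem_nhdsWithin] with θ hθ
        exact mul_pos hθ hy0
    have h1 := ((Fc_ratio_tendsto hM).comp hmap).mul_const (y ^ M)
    refine h1.congr' ?_
    filter_upwards [self_mem_nhdsWithin] with θ hθ
    have hθ0 : (0:ℝ) < θ := hθ
    simp only [Function.comp]
    rw [mul_pow]
    field_simp


end Stmt13Aux

open Stmt13Aux Filter in
/-- ASAPPP small-threshold asymptotics: if `X ~ Gamma(M, 1/M)` (Nakagami-`M` channel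
power, with cdf `F(x) = 1 − ∑_{k=0}^{M−1} (Mx)^k e^{−Mx}/k!` for `x ≥ 0` and `0` for
`x < 0`) and `Y ≥ 0` is independent of `X` with `E[Y^M] < ∞`, then
`lim_{θ→0⁺} P(X < θY)/θ^M = (M^{M−1}/(M−1)!)·E[Y^M]`. -/
theorem stmt_13 {Ω : Type*} [MeasurableSpace Ω] (μ : Measure Ω) [IsProbabilityMeasure μ]
    (M : ℕ) (hM : 1 ≤ M) (X Y : Ω → ℝ) (hX : Measurable X) (hY : Measurable Y)
    (hcdf : ∀ x : ℝ,
      (μ {ω | X ω ≤ x}).toReal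
        = if 0 ≤ x then
            1 - ∑ k ∈ Finset.range M,
              ((M : ℝ) * x) ^ k * Real.exp (-((M : ℝ) * x)) / (k.factorial : ℝ)
          else 0)
    (hYnn : ∀ ω, 0 ≤ Y ω)
    (hindep : IndepFun X Y μ)
    (hint : Integrable (fun ω => Y ω ^ M) μ) :
    Filter.Tendsto
      (fun θ : ℝ => (μ {ω | X ω < θ * Y ω}).toReal / θ ^ M)
      (nhdsWithin 0 (Set.Ioi 0))
      (nhds ((M : ℝ) ^ (M - 1) / ((M - 1).factorial : ℝ) * ∫ ω, Y ω ^ M ∂μ)) := by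
  classical
  set ν := Measure.map X μ with hν
  have hprobν : IsProbabilityMeasure ν := Measure.isProbabilityMeasure_map hX.aemeasurable
  -- cdf of ν
  have hIic : ∀ x : ℝ, (ν (Set.Iic x)).toReal = Fc M x := by
    intro x
    rw [hν, Measure.map_apply hX measurableSet_Iic]
    exact hcdf x
  have hIio : ∀ t : ℝ, (ν (Set.Iio t)).toReal = Fc M t := by
    intro t
    set s : ℕ → Set ℝ := fun n => Set.Iic (t - 1 / ((n : ℝ) + 1)) with hs
    have hmono : Monotone s := by
      intro a b hab
      apply Set.Iic_subset_Iic.2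
      have h1 : (1:ℝ) / ((b : ℝ) + 1) ≤ 1 / ((a : ℝ) + 1) := by
        gcongr
      linarith
    have hunion : (⋃ n, s n) = Set.Iio t := by
      ext x
      simp only [hs, Set.mem_iUnion, Set.mem_Iic, Set.mem_Iio]
      constructor
      · rintro ⟨n, hn⟩
        have : (0:ℝ) < 1 / ((n : ℝ) + 1) := by positivity
        linarith
      · intro hx
        obtain ⟨n, hn⟩ := exists_nat_one_div_lt (sub_pos.2 hx)
        exact ⟨n, by linarith⟩
    have h1 := tendsto_measure_iUnion_atTop (μ := ν) hmono
    rw [hunion] at h1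
    have h2 : Tendsto (fun n : ℕ => (ν (s n)).toReal) atTop (nhds ((ν (Set.Iio t)).toReal)) :=
      (ENNReal.tendsto_toReal (measure_ne_top ν _)).comp h1
    have h3 : Tendsto (fun n : ℕ => (ν (s n)).toReal) atTop (nhds (Fc M t)) := by
      have h4 : Tendsto (fun n : ℕ => t - 1 / ((n : ℝ) + 1)) atTop (nhds t) := by
        have := tendsto_one_div_add_atTop_nhds_zero_nat (𝕜 := ℝ)
        have h5 := tendsto_const_nhds (x := t) (f := atTop (α := ℕ)).sub this
        simpa using h5
      have h6 := ((Fc_continuous hM).tendsto t).comp h4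
      refine h6.congr fun n => ?_
      rw [hs]
      exact (hIic _).symm
    exact tendsto_nhds_unique h2 h3
  -- independence: probability as integral
  set ρ := Measure.map Y μ with hρ
  have hmap : Measure.map (fun ω => (X ω, Y ω)) μ = ν.prod ρ :=
    (indepFun_iff_map_prod_eq_prod_map_map hX.aemeasurable hY.aemeasurable).1 hindep
  have hkey : ∀ θ : ℝ, 0 < θ →
      (μ {ω | X ω < θ * Y ω}).toReal = ∫ ω, Fc M (θ * Y ω) ∂μ := by
    intro θ hθ
    have hsm : MeasurableSet {p : ℝ × ℝ | p.1 < θ * p.2} :=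
      measurableSet_lt measurable_fst (measurable_const.mul measurable_snd)
    have e1 : μ {ω | X ω < θ * Y ω}
        = Measure.map (fun ω => (X ω, Y ω)) μ {p : ℝ × ℝ | p.1 < θ * p.2} := by
      rw [Measure.map_apply (hX.prodMk hY) hsm]
      rfl
    have hgm : Measurable fun b : ℝ => ν (Set.Iio (θ * b)) := by
      have hmg : Monotone fun b : ℝ => ν (Set.Iio (θ * b)) := by
        intro a b hab
        exact measure_mono (Set.Iio_subset_Iio (by nlinarith))
      exact hmg.measurable
    have hpre : ∀ b : ℝ, ((fun x : ℝ => (x, b)) ⁻¹' {p : ℝ × ℝ | p.1 < θ * p.2})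
        = Set.Iio (θ * b) := fun b => rfl
    have e2 : μ {ω | X ω < θ * Y ω} = ∫⁻ ω, ν (Set.Iio (θ * Y ω)) ∂μ := by
      rw [e1, hmap, Measure.prod_apply_symm hsm]
      simp only [hpre]
      exact lintegral_map hgm hY
    rw [e2]
    have haem : AEMeasurable (fun ω => ν (Set.Iio (θ * Y ω))) μ := (hgm.comp hY).aemeasurable
    rw [← integral_toReal haem
      (Filter.Eventually.of_forall fun ω => measure_lt_top ν _)]
    exact integral_congr_ae (Filter.Eventually.of_forall fun ω => hIio _)
  -- constant identification
  have hconst : (M : ℝ) ^ (M - 1) / ((M - 1).factorial : ℝ)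
      = (M : ℝ) ^ M / (M.factorial : ℝ) := by
    obtain ⟨m, rfl⟩ : ∃ m, M = m + 1 := ⟨M - 1, (Nat.succ_pred_eq_of_pos hM).symm⟩
    simp only [Nat.add_sub_cancel, Nat.factorial_succ]
    push_cast
    have h1 : ((m.factorial : ℝ)) ≠ 0 := by positivity
    have h2 : ((m : ℝ) + 1) ≠ 0 := by positivity
    field_simp
    ring
  rw [hconst]
  set c : ℝ := (M : ℝ) ^ M / (M.factorial : ℝ) with hc
  -- dominated convergence
  have hdct : Tendsto (fun θ : ℝ => ∫ ω, Fc M (θ * Y ω) / θ ^ M ∂μ)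
      (nhdsWithin 0 (Set.Ioi 0)) (nhds (∫ ω, c * Y ω ^ M ∂μ)) := by
    refine tendsto_integral_filter_of_dominated_convergence (fun ω => c * Y ω ^ M)
      ?_ ?_ (hint.const_mul c) ?_
    · refine Filter.Eventually.of_forall fun θ => ?_
      exact ((((Fc_continuous hM).measurable).comp
        ((measurable_const.mul hY))).div_const _).aestronglyMeasurable
    · filter_upwards [self_mem_nhdsWithin] with θ hθ
      refine Filter.Eventually.of_forall fun ω => ?_
      have hθ0 : (0:ℝ) < θ := hθ
      have hFnn : 0 ≤ Fc M (θ * Y ω) := Fc_nonneg _ _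
      have hnorm : ‖Fc M (θ * Y ω) / θ ^ M‖ = Fc M (θ * Y ω) / θ ^ M := by
        rw [Real.norm_eq_abs, abs_of_nonneg (div_nonneg hFnn (pow_pos hθ0 M).le)]
      rw [hnorm]
      have hup := Fc_upper M (x := θ * Y ω) (mul_nonneg hθ0.le (hYnn ω))
      have heq : ((M:ℝ) * (θ * Y ω)) ^ M / (M.factorial : ℝ)
          = c * Y ω ^ M * θ ^ M := by
        rw [hc, mul_pow, mul_pow]
        ring
      rw [heq] at hup
      rw [div_le_iff₀ (pow_pos hθ0 M)]
      exact hup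
    · refine Filter.Eventually.of_forall fun ω => ?_
      exact Fc_pointwise hM (hYnn ω)
  have hintc : ∫ ω, c * Y ω ^ M ∂μ = c * ∫ ω, Y ω ^ M ∂μ := integral_const_mul c _
  rw [hintc] at hdct
  refine hdct.congr' ?_
  filter_upwards [self_mem_nhdsWithin] with θ hθ
  have hθ0 : (0:ℝ) < θ := hθ
  rw [hkey θ hθ0]
  exact integral_div _ _
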